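/- Let F be a perfect field of characteristic p > 0, L = F(T), S a finite set of places of L, and C the (finite) set of separable nonconstant S-unit solutions (u,v) of u + v = 1. Suppose v ∈ C and m₂ > m₁ ≥ 1 are integers with −1 + p^{m₂−m₁} > max_{w∈C} deg(w). If v^{−1+p^{m₂−m₁}} is also a p-power root of an element of C in the sense that (v^{−1+p^{m₂−m₁}})^{p^{m₁}} arises as a nonconstant S-unit solution u with u + (1−u) both S-units, then since gcd(−1 + p^{m₂−m₁}, p) = 1, v^{−1+p^{m₂−m₁}} ∈ C, contradicting deg(v^{−1+p^{m₂−m₁}}) ≥ −1 + p^{m₂−m₁} > max_{w∈C} deg(w). Conclude: for fixed v ∈ C, the set of exponents m ≥ 1 such that v^{p^m} = u/u₀ for some u in a fixed 'difference-unit' set A (as in the S-unit-difference lemma) is finite. -/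

import Mathlib

open Polynomial

/-- `u` is an `S`-unit of the rational function field `F(T)` (where `S` is a finite set of
finite places, given by irreducible polynomials, together with the place at infinity). -/
def IsSUnit {F : Type*} [Field F] (S : Finset (Polynomial F)) (u : RatFunc F) : Prop :=
  ∃ (c : F) (e : Polynomial F → ℤ), c ≠ 0 ∧
    u = RatFunc.C c * ∏ π ∈ S, (algebraMap (Polynomial F) (RatFunc F) π) ^ (e π)



section Helpers

variable {F : Type*} [Field F] {S : Finset (Polynomial F)}

lemma alg_ne_zero (hS : ∀ π ∈ S, Irreducible π) {π : Polynomial F} (hπ : π ∈ S) :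
    algebraMap (Polynomial F) (RatFunc F) π ≠ 0 := by
  simpa using (hS π hπ).ne_zero

lemma isSUnit_ne_zero (hS : ∀ π ∈ S, Irreducible π) {u : RatFunc F} (h : IsSUnit S u) :
    u ≠ 0 := by
  obtain ⟨c, e, hc, rfl⟩ := h
  exact mul_ne_zero (by simpa using hc)
    (Finset.prod_ne_zero_iff.mpr fun π hπ => zpow_ne_zero _ (alg_ne_zero hS hπ))

lemma isSUnit_mul (hS : ∀ π ∈ S, Irreducible π) {u w : RatFunc F}
    (hu : IsSUnit S u) (hw : IsSUnit S w) : IsSUnit S (u * w) := by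
  obtain ⟨c, e, hc, rfl⟩ := hu
  obtain ⟨d, e', hd, rfl⟩ := hw
  refine ⟨c * d, e + e', mul_ne_zero hc hd, ?_⟩
  rw [map_mul, mul_mul_mul_comm, ← Finset.prod_mul_distrib]
  congr 1
  refine Finset.prod_congr rfl fun π hπ => ?_
  rw [← zpow_add₀ (alg_ne_zero hS hπ)]; rfl

lemma isSUnit_inv (hS : ∀ π ∈ S, Irreducible π) {u : RatFunc F}
    (hu : IsSUnit S u) : IsSUnit S u⁻¹ := by
  obtain ⟨c, e, hc, rfl⟩ := hu
  refine ⟨c⁻¹, -e, inv_ne_zero hc, ?_⟩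
  rw [mul_inv, map_inv₀, ← Finset.prod_inv_distrib]
  have : ∀ π ∈ S, ((algebraMap (Polynomial F) (RatFunc F) π) ^ (e π))⁻¹
      = (algebraMap (Polynomial F) (RatFunc F) π) ^ ((-e) π) := fun π hπ => by
    rw [← zpow_neg]; rfl
  rw [Finset.prod_congr rfl this]

lemma isSUnit_one (hS : ∀ π ∈ S, Irreducible π) : IsSUnit S (1 : RatFunc F) :=
  ⟨1, 0, one_ne_zero, by simp⟩

lemma isSUnit_pow (hS : ∀ π ∈ S, Irreducible π) {u : RatFunc F}
    (hu : IsSUnit S u) (n : ℕ) : IsSUnit S (u ^ n) := by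
  induction n with
  | zero => simpa using isSUnit_one hS
  | succ n ih => rw [pow_succ]; exact isSUnit_mul hS ih hu

lemma sum_image_le' {α β : Type*} [DecidableEq β] (s : Finset α) (f : α → β) (g : β → ℕ) :
    ∑ b ∈ s.image f, g b ≤ ∑ a ∈ s, g (f a) := by
  classical
  induction s using Finset.induction with
  | empty => simp
  | @insert a s h ih =>
    rw [Finset.image_insert, Finset.sum_insert h]
    by_cases hf : f a ∈ s.image f
    · rw [Finset.insert_eq_self.mpr hf]; omega
    · rw [Finset.sum_insert hf]; omega

end Helpers

section Key
open UniqueFactorizationMonoid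
variable {F : Type*} [Field F] {S : Finset (Polynomial F)}

lemma key_dvd (hS : ∀ π ∈ S, Irreducible π) {f g : Polynomial F}
    (hcop : IsCoprime f g) (hg : g ≠ 0) (N : ℕ)
    (hsu : IsSUnit S ((algebraMap (Polynomial F) (RatFunc F) f /
      algebraMap (Polynomial F) (RatFunc F) g) ^ N - 1))
    {q : Polynomial F} (hq : Prime q) (hqd : q ∣ f ^ N - g ^ N) :
    ∃ π ∈ S, q ∣ π := by
  classical
  set α := algebraMap (Polynomial F) (RatFunc F) with hα
  obtain ⟨c, e, hc, heq⟩ := hsu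
  have hgN : α (g ^ N) ≠ 0 := RatFunc.algebraMap_ne_zero (pow_ne_zero _ hg)
  set P : Polynomial F := ∏ π ∈ S, π ^ (e π).toNat with hP
  set Q : Polynomial F := ∏ π ∈ S, π ^ (-(e π)).toNat with hQ
  have hQ0 : Q ≠ 0 :=
    Finset.prod_ne_zero_iff.mpr fun π hπ => pow_ne_zero _ (hS π hπ).ne_zero
  have hprod : ∏ π ∈ S, (α π) ^ (e π) = α P / α Q := by
    rw [hP, hQ, map_prod, map_prod, ← Finset.prod_div_distrib]
    refine Finset.prod_congr rfl fun π hπ => ?_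
    rw [map_pow, map_pow, ← zpow_natCast (α π) (e π).toNat,
      ← zpow_natCast (α π) (-(e π)).toNat, ← zpow_sub₀ (alg_ne_zero hS hπ)]
    congr 1
    omega
  have hlhs : (α f / α g) ^ N - 1 = α (f ^ N - g ^ N) / α (g ^ N) := by
    rw [div_pow, ← map_pow, ← map_pow, map_sub, sub_div, div_self hgN]
  have heq2 : α (f ^ N - g ^ N) / α (g ^ N) = (α (C c) * α P) / α Q := by
    rw [← hlhs, heq, hprod, RatFunc.algebraMap_C, mul_div_assoc]
  have hpoly : (f ^ N - g ^ N) * Q = C c * P * g ^ N := by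
    apply RatFunc.algebraMap_injective F
    rw [map_mul, map_mul, map_mul]
    have := (div_eq_div_iff hgN (RatFunc.algebraMap_ne_zero hQ0)).mp heq2
    linear_combination this
  have hdvd : q ∣ C c * (P * g ^ N) := by
    rw [← mul_assoc, ← hpoly]
    exact hqd.mul_right _
  rcases hq.dvd_mul.mp hdvd with h | h
  · exact absurd (isUnit_of_dvd_unit h (isUnit_C.mpr (isUnit_iff_ne_zero.mpr hc)))
      hq.not_unit
  rcases hq.dvd_mul.mp h with h | h
  · obtain ⟨π, hπ, hd⟩ := hq.exists_mem_finset_dvd h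
    exact ⟨π, hπ, hq.dvd_of_dvd_pow hd⟩
  · have hqg : q ∣ g := hq.dvd_of_dvd_pow h
    have hqf : q ∣ f := by
      refine hq.dvd_of_dvd_pow (n := N) ?_
      have : f ^ N = (f ^ N - g ^ N) + g ^ N := by ring
      rw [this]
      exact dvd_add hqd h
    exact absurd (hcop.isUnit_of_dvd' hqf hqg) hq.not_unit

variable [PerfectField F] (p : ℕ) [Fact p.Prime] [CharP F p]

lemma bound_lemma (hS : ∀ π ∈ S, Irreducible π)
    {f g f₁ g₁ : Polynomial F} {j : ℕ} (hcop : IsCoprime f g)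
    (hf : f ≠ 0) (hg : g ≠ 0) (h0 : 0 < f.natDegree + g.natDegree)
    (hf₁ : f = f₁ ^ p ^ j) (hg₁ : g = g₁ ^ p ^ j)
    (hder : derivative f₁ ≠ 0 ∨ derivative g₁ ≠ 0)
    (k s : ℕ) (hk : 1 ≤ k)
    (hsu : IsSUnit S ((algebraMap (Polynomial F) (RatFunc F) f /
      algebraMap (Polynomial F) (RatFunc F) g) ^ (p ^ s * (p ^ k - 1)) - 1)) :
    p ^ k ≤ f₁.natDegree + g₁.natDegree + (∑ π ∈ S, π.natDegree) + 1 := by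
  classical
  have hp2 : 2 ≤ p := (Fact.out : p.Prime).two_le
  set n : ℕ := p ^ k - 1 with hn
  have hpk2 : 2 ≤ p ^ k := le_trans hp2 (Nat.le_self_pow (by omega) p)
  have hn1 : 0 < n := by omega
  set N : ℕ := p ^ s * n with hN
  have hN1 : 0 < N := Nat.mul_pos (Nat.pow_pos (by omega : 0 < p)) hn1
  have hpj : (p : ℕ) ^ j ≠ 0 := by positivity
  have hf₁0 : f₁ ≠ 0 := fun h => hf (by rw [hf₁, h, zero_pow hpj])
  have hg₁0 : g₁ ≠ 0 := fun h => hg (by rw [hg₁, h, zero_pow hpj])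
  have hcop₁ : IsCoprime f₁ g₁ :=
    (hcop.of_isCoprime_of_dvd_left (by rw [hf₁]; exact dvd_pow_self f₁ hpj)).of_isCoprime_of_dvd_right
      (by rw [hg₁]; exact dvd_pow_self g₁ hpj)
  set b : Polynomial F := f ^ N - g ^ N with hb
  have hb0 : b ≠ 0 := by
    intro h
    have hfe : f ^ N = g ^ N := by
      have := sub_eq_zero.mp h
      exact this
    have huf : IsUnit f := by
      refine (hcop.pow_right (n := N)).isUnit_of_dvd ?_
      rw [← hfe]; exact dvd_pow_self f hN1.ne'
    have hug : IsUnit g := by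
      refine (hcop.symm.pow_right (n := N)).isUnit_of_dvd ?_
      rw [hfe]; exact dvd_pow_self g hN1.ne'
    have := natDegree_eq_zero_of_isUnit huf
    have := natDegree_eq_zero_of_isUnit hug
    omega
  set B₁ : Polynomial F := f₁ ^ n - g₁ ^ n with hB₁
  have hbB : b = B₁ ^ p ^ (j + s) := by
    have e1 : f ^ N = (f₁ ^ n) ^ p ^ (j + s) := by
      rw [hf₁, ← pow_mul, ← pow_mul]
      congr 1
      rw [hN, pow_add]
      ring
    have e2 : g ^ N = (g₁ ^ n) ^ p ^ (j + s) := by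
      rw [hg₁, ← pow_mul, ← pow_mul]
      congr 1
      rw [hN, pow_add]
      ring
    rw [hb, hB₁, e1, e2, sub_pow_char_pow]
  have hpjs : (p : ℕ) ^ (j + s) ≠ 0 := by positivity
  have hB₁0 : B₁ ≠ 0 := fun h => hb0 (by rw [hbB, h, zero_pow hpjs])
  -- the abc triple
  set a : Polynomial F := f₁ ^ n with ha'
  set bb : Polynomial F := g₁ ^ n - f₁ ^ n with hbb'
  set cc : Polynomial F := -(g₁ ^ n) with hcc'
  have hbbB : bb = -B₁ := by rw [hbb', hB₁]; ring
  have ha0 : a ≠ 0 := pow_ne_zero _ hf₁0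
  have hbb0 : bb ≠ 0 := by rw [hbbB]; exact neg_ne_zero.mpr hB₁0
  have hcc0 : cc ≠ 0 := neg_ne_zero.mpr (pow_ne_zero _ hg₁0)
  have h1 : IsCoprime (f₁ ^ n) (g₁ ^ n) := hcop₁.pow
  have hab : IsCoprime a bb := by
    have := h1.add_mul_left_right (-1)
    simpa [ha', hbb', sub_eq_add_neg, mul_neg, mul_one] using this
  have hbc : IsCoprime bb cc := by
    have h2 : IsCoprime (g₁ ^ n) (f₁ ^ n - g₁ ^ n) := by
      have := h1.symm.add_mul_left_right (-1)
      simpa [sub_eq_add_neg, mul_neg, mul_one] using this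
    have h3 : IsCoprime (g₁ ^ n) (-(f₁ ^ n - g₁ ^ n)) := h2.neg_right
    rw [neg_sub] at h3
    exact h3.symm.neg_right
  have hca : IsCoprime cc a := h1.symm.neg_left
  have hsum : a + bb + cc = 0 := by rw [ha', hbb', hcc']; ring
  rcases Polynomial.abc ha0 hbb0 hcc0 hab hsum with ⟨h₁, h₂, h₃⟩ | ⟨hd₁, hd₂, hd₃⟩
  · -- degree bounds
    set R : ℕ := (radical (a * bb * cc)).natDegree with hR'
    have hRsplit : radical (a * bb * cc) = radical a * radical bb * radical cc := by
      rw [radical_mul (hca.symm.mul_left hbc).isRelPrime,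
        radical_mul hab.isRelPrime]
    have hRnd : R = (radical a).natDegree + (radical bb).natDegree + (radical cc).natDegree := by
      rw [hR', hRsplit, natDegree_mul (mul_ne_zero (radical_ne_zero (a := a)) (radical_ne_zero (a := bb)))
        (radical_ne_zero (a := cc)), natDegree_mul (radical_ne_zero (a := a)) (radical_ne_zero (a := bb))]
    have t1 : (radical a).natDegree ≤ f₁.natDegree := by
      rw [ha', radical_pow f₁ hn1.ne']
      exact natDegree_le_of_dvd (radical_dvd_self (a := f₁)) hf₁0
    have t3 : (radical cc).natDegree ≤ g₁.natDegree := by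
      rw [hcc', UniqueFactorizationDomain.radical_neg, radical_pow g₁ hn1.ne']
      exact natDegree_le_of_dvd (radical_dvd_self (a := g₁)) hg₁0
    have t2 : (radical bb).natDegree ≤ ∑ π ∈ S, π.natDegree := by
      rw [hbbB, UniqueFactorizationDomain.radical_neg]
      have hsub : primeFactors B₁ ⊆ S.image (fun π => normalize π) := by
        intro q hq
        have hq' : q ∈ normalizedFactors B₁ := by
          exact UniqueFactorizationMonoid.mem_primeFactors.mp hq
        have hqp := prime_of_normalized_factor q hq'
        have hqd : q ∣ B₁ := dvd_of_mem_normalizedFactors hq'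
        have hqb : q ∣ b := by
          rw [hbB]
          exact hqd.trans (dvd_pow_self B₁ hpjs)
        obtain ⟨π, hπS, hqπ⟩ := key_dvd hS hcop hg N hsu hqp hqb
        have hassoc : Associated q π :=
          hqp.irreducible.associated_of_dvd (hS π hπS) hqπ
        have hnq : normalize q = normalize π :=
          normalize_eq_normalize hassoc.dvd hassoc.symm.dvd
        refine Finset.mem_image.mpr ⟨π, hπS, ?_⟩
        rw [← hnq, normalize_normalized_factor q hq']
      have hrad : radical B₁ = ∏ q ∈ primeFactors B₁, q := rfl
      have hndeq : (radical B₁).natDegree = ∑ q ∈ primeFactors B₁, q.natDegree := by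
        rw [hrad]
        refine natDegree_prod _ _ fun q hq => ?_
        have hq' : q ∈ normalizedFactors B₁ := by
          exact UniqueFactorizationMonoid.mem_primeFactors.mp hq
        exact (prime_of_normalized_factor q hq').ne_zero
      rw [hndeq]
      calc ∑ q ∈ primeFactors B₁, q.natDegree
          ≤ ∑ q ∈ S.image (fun π => normalize π), q.natDegree :=
            Finset.sum_le_sum_of_subset hsub
        _ ≤ ∑ π ∈ S, (normalize π).natDegree := sum_image_le' S _ _
        _ = ∑ π ∈ S, π.natDegree := by
            refine Finset.sum_congr rfl fun π _ => ?_
            rw [natDegree, natDegree, degree_normalize]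
    have hda : a.natDegree = n * f₁.natDegree := by rw [ha', natDegree_pow]
    have hdc : cc.natDegree = n * g₁.natDegree := by rw [hcc', natDegree_neg, natDegree_pow]
    have hd10 : 0 < f₁.natDegree + g₁.natDegree := by
      by_contra hcon
      push_neg at hcon
      have hz1 : f₁.natDegree = 0 := by omega
      have hz2 : g₁.natDegree = 0 := by omega
      have e1 : f.natDegree = 0 := by rw [hf₁, natDegree_pow, hz1, mul_zero]
      have e2 : g.natDegree = 0 := by rw [hg₁, natDegree_pow, hz2, mul_zero]
      omega
    have hnR : n + 1 ≤ R := by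
      rcases Nat.eq_zero_or_pos f₁.natDegree with hzero | hpos
      · have hgpos : 0 < g₁.natDegree := by omega
        calc n + 1 ≤ n * g₁.natDegree + 1 := by
              have := Nat.le_mul_of_pos_right n hgpos
              omega
          _ = cc.natDegree + 1 := by rw [hdc]
          _ ≤ R := h₃
      · calc n + 1 ≤ n * f₁.natDegree + 1 := by
              have := Nat.le_mul_of_pos_right n hpos
              omega
          _ = a.natDegree + 1 := by rw [hda]
          _ ≤ R := h₁
    have : R ≤ f₁.natDegree + g₁.natDegree + ∑ π ∈ S, π.natDegree := by omega
    omega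
  · -- derivative case: contradiction
    exfalso
    have hpn : ¬ (p ∣ n) := by
      intro hdvd
      have h1' : p ∣ p ^ k := dvd_pow_self p (by omega : k ≠ 0)
      have h2' : p ∣ p ^ k - n := Nat.dvd_sub h1' hdvd
      have : p ^ k - n = 1 := by omega
      rw [this] at h2'
      have := Nat.le_of_dvd one_pos h2'
      omega
    have hnF : (n : F) ≠ 0 := by
      rw [Ne, CharP.cast_eq_zero_iff F p]
      exact hpn
    rcases hder with hdf | hdg
    · apply hdf
      have := hd₁
      rw [ha', derivative_pow] at this
      rcases mul_eq_zero.mp this with h | h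
      · rcases mul_eq_zero.mp h with h' | h'
        · exact absurd h' (C_ne_zero.mpr (by exact_mod_cast hnF))
        · exact absurd h' (pow_ne_zero _ hf₁0)
      · exact h
    · apply hdg
      have := hd₃
      rw [hcc', derivative_neg, neg_eq_zero, derivative_pow] at this
      rcases mul_eq_zero.mp this with h | h
      · rcases mul_eq_zero.mp h with h' | h'
        · exact absurd h' (C_ne_zero.mpr (by exact_mod_cast hnF))
        · exact absurd h' (pow_ne_zero _ hg₁0)
      · exact h

end Key

section Decomp


variable {F : Type*} [Field F] [PerfectField F] (p : ℕ) [Fact p.Prime] [CharP F p]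

lemma pth_root_of_deriv_zero {f : Polynomial F} (hf : derivative f = 0) :
    ∃ h : Polynomial F, f = h ^ p := by
  have hp : p ≠ 0 := (Fact.out : p.Prime).ne_zero
  refine ⟨(f.contract p).map ((frobeniusEquiv F p).symm : F →+* F), ?_⟩
  have h1 : map (frobenius F p) (expand F p ((f.contract p).map
      ((frobeniusEquiv F p).symm : F →+* F))) = _ ^ p := map_frobenius_expand p _
  rw [← h1, map_expand, map_map]
  have : (frobenius F p).comp ((frobeniusEquiv F p).symm : F →+* F) = RingHom.id F := by
    ext x
    exact (frobeniusEquiv F p).apply_symm_apply x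
  rw [this, map_id, expand_contract p hf hp]

lemma decomp_aux : ∀ (d : ℕ) (f g : Polynomial F), f ≠ 0 → g ≠ 0 →
    f.natDegree + g.natDegree ≤ d →
    ∃ (j : ℕ) (f₁ g₁ : Polynomial F), f = f₁ ^ p ^ j ∧ g = g₁ ^ p ^ j ∧
      (derivative f₁ ≠ 0 ∨ derivative g₁ ≠ 0 ∨
        (f₁.natDegree = 0 ∧ g₁.natDegree = 0)) := by
  intro d
  induction d with
  | zero =>
    intro f g hf hg hd
    exact ⟨0, f, g, by simp, by simp, Or.inr (Or.inr (by omega))⟩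
  | succ d ih =>
    intro f g hf hg hd
    by_cases hdf : derivative f ≠ 0
    · exact ⟨0, f, g, by simp, by simp, Or.inl hdf⟩
    by_cases hdg : derivative g ≠ 0
    · exact ⟨0, f, g, by simp, by simp, Or.inr (Or.inl hdg)⟩
    push_neg at hdf hdg
    by_cases hcon : f.natDegree = 0 ∧ g.natDegree = 0
    · exact ⟨0, f, g, by simp, by simp, Or.inr (Or.inr hcon)⟩
    obtain ⟨h, rfl⟩ := pth_root_of_deriv_zero p hdf
    obtain ⟨i, rfl⟩ := pth_root_of_deriv_zero p hdg
    have hh : h ≠ 0 := fun h0 => hf (by simp [h0, pow_eq_zero_iff (Fact.out : p.Prime).ne_zero])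
    have hi : i ≠ 0 := fun h0 => hg (by simp [h0, pow_eq_zero_iff (Fact.out : p.Prime).ne_zero])
    have hdeg : (h ^ p).natDegree + (i ^ p).natDegree = p * (h.natDegree + i.natDegree) := by
      rw [natDegree_pow, natDegree_pow]; ring
    have hple : h.natDegree + i.natDegree ≤ d := by
      have h2 : 2 ≤ p := (Fact.out : p.Prime).two_le
      have := hd
      rw [hdeg] at this
      nlinarith
    obtain ⟨j, f₁, g₁, hf₁, hg₁, halt⟩ := ih h i hh hi hple
    refine ⟨j + 1, f₁, g₁, ?_, ?_, halt⟩
    · rw [hf₁, ← pow_mul, pow_succ]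
    · rw [hg₁, ← pow_mul, pow_succ]

end Decomp

/-- In characteristic `p > 0`, let `A ⊆ F(T)` be a set of `S`-units whose
pairwise differences are `S`-units, `u₀ ∈ A`, and let `v` be a nonconstant `S`-unit with
`1 - v` also an `S`-unit (so `(v, 1-v)` is a nonconstant `S`-unit solution of `X + Y = 1`).
Then the set of exponents `m ≥ 1` such that `v^{p^m} = u/u₀` for some `u ∈ A` is finite. -/
theorem stmt17 {F : Type*} [Field F] [PerfectField F]
    (p : ℕ) [Fact p.Prime] [CharP F p]
    (S : Finset (Polynomial F)) (hS : ∀ π ∈ S, Irreducible π)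
    (A : Set (RatFunc F)) (hA : ∀ u ∈ A, IsSUnit S u)
    (hdiff : ∀ u ∈ A, ∀ v ∈ A, u ≠ v → IsSUnit S (u - v))
    (u₀ : RatFunc F) (hu₀ : u₀ ∈ A)
    (v : RatFunc F) (hvnc : ¬ ∃ c : F, v = RatFunc.C c)
    (hvS : IsSUnit S v) (h1v : IsSUnit S (1 - v)) :
    {m : ℕ | 1 ≤ m ∧ ∃ u ∈ A, u = u₀ * v ^ (p ^ m)}.Finite := by

  classical
  have hpP : p.Prime := Fact.out
  have hp2 : 2 ≤ p := hpP.two_le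
  have hv0 : v ≠ 0 := fun h => hvnc ⟨0, by rw [h, map_zero]⟩
  set f : Polynomial F := v.num with hfdef
  set g : Polynomial F := v.denom with hgdef
  have hg0 : g ≠ 0 := v.denom_ne_zero
  have hcop : IsCoprime f g := v.isCoprime_num_denom
  have hvfg : algebraMap (Polynomial F) (RatFunc F) f /
      algebraMap (Polynomial F) (RatFunc F) g = v := v.num_div_denom
  have hf0 : f ≠ 0 := RatFunc.num_ne_zero hv0
  have h0 : 0 < f.natDegree + g.natDegree := by
    by_contra hcon
    push_neg at hcon
    have h1 : f.natDegree = 0 := by omega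
    have h2 : g.natDegree = 0 := by omega
    have hg1 : g = 1 := (RatFunc.monic_denom v).natDegree_eq_zero.mp h2
    obtain ⟨a, hfa⟩ := Polynomial.natDegree_eq_zero.mp h1
    exact hvnc ⟨a, by rw [← hvfg, hg1, map_one, div_one, ← hfa, RatFunc.algebraMap_C]⟩
  obtain ⟨j, f₁, g₁, hf₁, hg₁, halt⟩ :=
    decomp_aux p (f.natDegree + g.natDegree) f g hf0 hg0 le_rfl
  have hder : derivative f₁ ≠ 0 ∨ derivative g₁ ≠ 0 := by
    rcases halt with h | h | ⟨h1, h2⟩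
    · exact Or.inl h
    · exact Or.inr h
    · exfalso
      have e1 : f.natDegree = 0 := by rw [hf₁, natDegree_pow, h1, mul_zero]
      have e2 : g.natDegree = 0 := by rw [hg₁, natDegree_pow, h2, mul_zero]
      omega
  have hvN : ∀ N : ℕ, 0 < N → v ^ N ≠ 1 := by
    intro N hN h1
    have hfe : f ^ N = g ^ N := by
      apply RatFunc.algebraMap_injective F
      rw [map_pow, map_pow]
      rw [← hvfg, div_pow] at h1
      exact (div_eq_one_iff_eq (pow_ne_zero _ (RatFunc.algebraMap_ne_zero hg0))).mp h1
    have huf : IsUnit f := (hcop.pow_right (n := N)).isUnit_of_dvd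
      (by rw [← hfe]; exact dvd_pow_self f hN.ne')
    have hug : IsUnit g := (hcop.symm.pow_right (n := N)).isUnit_of_dvd
      (by rw [hfe]; exact dvd_pow_self g hN.ne')
    have e1 := natDegree_eq_zero_of_isUnit huf
    have e2 := natDegree_eq_zero_of_isUnit hug
    omega
  set D : ℕ := ∑ π ∈ S, π.natDegree with hD
  set Bd : ℕ := f₁.natDegree + g₁.natDegree + D + 1 with hBd
  rw [← Set.not_infinite]
  intro hinf
  obtain ⟨m₁, hm₁1, u₁, hu₁A, hu₁⟩ := hinf.nonempty
  obtain ⟨m₂, hm₂mem, hm₂gt⟩ := hinf.exists_gt (m₁ + Bd)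
  obtain ⟨hm₂1, u₂, hu₂A, hu₂⟩ := hm₂mem
  set k : ℕ := m₂ - m₁ with hk
  have hkpos : 1 ≤ k := by omega
  set n : ℕ := p ^ k - 1 with hn
  set N : ℕ := p ^ m₁ * n with hN
  have hpk2 : 2 ≤ p ^ k := le_trans hp2 (Nat.le_self_pow (by omega) p)
  have hN1 : 0 < N := Nat.mul_pos (Nat.pow_pos (by omega : 0 < p)) (by omega)
  have hexp : p ^ m₂ = p ^ m₁ + N := by
    have hm : m₂ = m₁ + k := by omega
    rw [hm, pow_add, hN]
    have : p ^ k = 1 + n := by omega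
    rw [this]
    ring
  have hvNe : v ^ N - 1 ≠ 0 := sub_ne_zero.mpr (hvN N hN1)
  have hu0ne : u₀ ≠ 0 := isSUnit_ne_zero hS (hA u₀ hu₀)
  have hdiffeq : u₂ - u₁ = u₀ * v ^ (p ^ m₁) * (v ^ N - 1) := by
    rw [hu₂, hu₁, hexp, pow_add]
    ring
  have hne : u₂ ≠ u₁ := by
    intro h
    have h2 : u₀ * v ^ (p ^ m₁) * (v ^ N - 1) = 0 := by rw [← hdiffeq, h, sub_self]
    rcases mul_eq_zero.mp h2 with h3 | h3
    · rcases mul_eq_zero.mp h3 with h4 | h4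
      · exact hu0ne h4
      · exact pow_ne_zero _ hv0 h4
    · exact hvNe h3
  have hsu : IsSUnit S (v ^ N - 1) := by
    have h1 := hdiff u₂ hu₂A u₁ hu₁A hne
    rw [hdiffeq] at h1
    have h2 : IsSUnit S (u₀ * v ^ (p ^ m₁)) :=
      isSUnit_mul hS (hA u₀ hu₀) (isSUnit_pow hS hvS _)
    have h3 := isSUnit_mul hS h1 (isSUnit_inv hS h2)
    have h4 : u₀ * v ^ (p ^ m₁) * (v ^ N - 1) * (u₀ * v ^ (p ^ m₁))⁻¹ = v ^ N - 1 := by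
      field_simp
    rwa [h4] at h3
  have hfinal := bound_lemma p hS hcop hf0 hg0 h0 hf₁ hg₁ hder k m₁ hkpos
    (by rw [hvfg]; exact hsu)
  have hk2 : k < 2 ^ k := Nat.lt_two_pow_self
  have hk3 : 2 ^ k ≤ p ^ k := Nat.pow_le_pow_left hp2 k
  omega
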